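/- In the Plackett–Luce model on a finite set e with scores s : e → ℝ, the probability that item a ∈ e is ranked first equals exp(s_a) / ∑_{b ∈ e} exp(s_b). -/

import Mathlib

open scoped BigOperators

/-- Plackett–Luce probability of a ranking `π : Fin m → ι` under scores `s`. -/
noncomputable def PLProb {ι : Type*} {m : ℕ} (s : ι → ℝ) (π : Fin m → ι) : ℝ :=
  ∏ j : Fin m, Real.exp (s (π j)) / ∑ t ∈ Finset.Ici j, Real.exp (s (π t))


lemma PLProb_congr {ι κ : Type*} {m : ℕ} {s1 : ι → ℝ} {π1 : Fin m → ι}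
    {s2 : κ → ℝ} {π2 : Fin m → κ} (h : ∀ j, s1 (π1 j) = s2 (π2 j)) :
    PLProb s1 π1 = PLProb s2 π2 := by
  unfold PLProb
  refine Finset.prod_congr rfl fun j _ => ?_
  rw [h j]
  congr 1
  exact Finset.sum_congr rfl fun t _ => by rw [h t]

lemma Fin.Ici_succ' {n : ℕ} (j : Fin n) :
    Finset.Ici j.succ = (Finset.Ici j).map (Fin.succEmb n) := by
  ext t
  simp only [Finset.mem_Ici, Finset.mem_map, Fin.coe_succEmb]
  constructor
  · intro h
    have ht : t ≠ 0 := by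
      rintro rfl
      exact absurd h (by simp [Fin.le_def])
    obtain ⟨u, rfl⟩ := Fin.exists_succ_eq.2 ht
    exact ⟨u, Fin.succ_le_succ_iff.1 h, rfl⟩
  · rintro ⟨u, hu, rfl⟩
    exact Fin.succ_le_succ_iff.2 hu

lemma PLProb_succ {α : Type*} [Fintype α] (s : α → ℝ) (n : ℕ) (π : Fin (n + 1) ≃ α) :
    PLProb s (fun j => π j)
      = (Real.exp (s (π 0)) / ∑ b : α, Real.exp (s b)) *
        PLProb s (fun j : Fin n => π j.succ) := by
  unfold PLProb
  rw [Fin.prod_univ_succ]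
  congr 1
  · have h1 : Finset.Ici (0 : Fin (n + 1)) = Finset.univ := by
      ext t; simp [Fin.zero_le]
    rw [h1, Equiv.sum_comp π (fun b => Real.exp (s b))]
  · refine Finset.prod_congr rfl fun j _ => ?_
    congr 1
    rw [Fin.Ici_succ', Finset.sum_map]
    rfl

lemma pl_step {α : Type*} [Fintype α] [DecidableEq α] (n : ℕ) (s : α → ℝ) (a : α) :
    ∑ π ∈ Finset.univ.filter (fun π : Fin (n + 1) ≃ α => π 0 = a),
        PLProb s (fun j => π j)
      = (Real.exp (s a) / ∑ b : α, Real.exp (s b)) *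
        ∑ σ : Fin n ≃ {b : α // b ≠ a},
          PLProb (fun b : {b : α // b ≠ a} => s b) (fun j => σ j) := by
  rw [Finset.mul_sum]
  refine Finset.sum_bij'
    (i := fun π hπ => Equiv.optionSubtype a ⟨(finSuccEquiv n).symm.trans π,
      (Equiv.trans_apply _ _ _).trans ((congrArg π finSuccEquiv_symm_none).trans (Finset.mem_filter.1 hπ).2)⟩)
    (j := fun σ _ => (finSuccEquiv n).trans ((Equiv.optionSubtype a).symm σ).val)
    (fun _ _ => Finset.mem_univ _)
    (fun σ _ => by
      refine Finset.mem_filter.2 ⟨Finset.mem_univ _, ?_⟩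
      exact (Equiv.trans_apply _ _ _).trans ((congrArg (⇑((Equiv.optionSubtype a).symm σ).val)
        finSuccEquiv_zero).trans ((Equiv.optionSubtype a).symm σ).property))
    (fun π hπ => by
      rw [Equiv.symm_apply_apply]
      ext x
      simp)
    (fun σ _ => by
      ext j
      rw [Equiv.coe_optionSubtype_apply_apply]
      simp [Equiv.optionSubtype_symm_apply_apply_coe])
    (fun π hπ => ?_)
  rw [PLProb_succ s n π, show Real.exp (s (π 0)) = Real.exp (s a) by rw [(Finset.mem_filter.1 hπ).2]]
  congr 1

universe u

lemma pl_sum_one (n : ℕ) :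
    ∀ (α : Type u) [Fintype α] [DecidableEq α], Fintype.card α = n →
      ∀ s : α → ℝ, ∑ π : Fin n ≃ α, PLProb s (fun j => π j) = 1 := by
  induction n with
  | zero =>
    intro α _ _ hcard s
    haveI : IsEmpty α := Fintype.card_eq_zero_iff.1 hcard
    have h1 : ∀ π : Fin 0 ≃ α, PLProb s (fun j => π j) = 1 := fun π => by
      unfold PLProb; simp
    rw [Finset.sum_congr rfl (fun π _ => h1 π), Finset.sum_const, Finset.card_univ,
      Fintype.card_equiv (Equiv.equivOfIsEmpty (Fin 0) α)]
    simp
  | succ n ih =>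
    intro α _ _ hcard s
    haveI : Nonempty α := Fintype.card_pos_iff.1 (by omega)
    have hT : (0 : ℝ) < ∑ b : α, Real.exp (s b) :=
      Finset.sum_pos (fun b _ => Real.exp_pos _) Finset.univ_nonempty
    rw [← Finset.sum_fiberwise Finset.univ (fun π : Fin (n + 1) ≃ α => π 0)
      (fun π => PLProb s (fun j => π j))]
    have hfib : ∀ a : α,
        ∑ π ∈ Finset.univ.filter (fun π : Fin (n + 1) ≃ α => π 0 = a),
          PLProb s (fun j => π j) = Real.exp (s a) / ∑ b : α, Real.exp (s b) := by
      intro a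
      rw [pl_step n s a, ih {b : α // b ≠ a} ?_ (fun b => s b), mul_one]
      rw [Fintype.card_subtype_compl, hcard, Fintype.card_subtype_eq]; omega
    rw [Finset.sum_congr rfl (fun a _ => hfib a), ← Finset.sum_div, div_self hT.ne']

lemma pl_key {α : Type u} [Fintype α] [DecidableEq α] (s : α → ℝ) (a : α)
    (m : ℕ) (h0 : 0 < m) (hm : Fintype.card α = m) :
    ∑ π ∈ Finset.univ.filter (fun π : Fin m ≃ α => π ⟨0, h0⟩ = a),
        PLProb s (fun j => π j)
      = Real.exp (s a) / ∑ b : α, Real.exp (s b) := by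
  obtain ⟨n, rfl⟩ := Nat.exists_eq_succ_of_ne_zero h0.ne'
  have h00 : (⟨0, h0⟩ : Fin (n + 1)) = 0 := rfl
  simp only [h00]
  rw [pl_step n s a, pl_sum_one n {b : α // b ≠ a}
    (by rw [Fintype.card_subtype_compl, hm, Fintype.card_subtype_eq]; omega) (fun b => s b), mul_one]

/-- In the Plackett–Luce model on the finite set `e`, the probability that item
`a ∈ e` is ranked first equals `exp (s a) / ∑ b ∈ e, exp (s b)`. -/
theorem pl_top_one_prob {ι : Type*} [DecidableEq ι] (e : Finset ι) (s : ι → ℝ)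
    (a : ι) (ha : a ∈ e) :
    ∑ π ∈ Finset.univ.filter
        (fun π : Fin e.card ≃ {x // x ∈ e} =>
          ((π ⟨0, Finset.card_pos.mpr ⟨a, ha⟩⟩ : {x // x ∈ e}) : ι) = a),
      PLProb (fun x : {x // x ∈ e} => s x.val) (fun j => π j)
      = Real.exp (s a) / ∑ b ∈ e, Real.exp (s b) := by
  have h0 : 0 < e.card := Finset.card_pos.mpr ⟨a, ha⟩
  have hfil : Finset.univ.filter
        (fun π : Fin e.card ≃ {x // x ∈ e} =>
          ((π ⟨0, Finset.card_pos.mpr ⟨a, ha⟩⟩ : {x // x ∈ e}) : ι) = a)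
      = Finset.univ.filter
        (fun π : Fin e.card ≃ {x // x ∈ e} => π ⟨0, h0⟩ = ⟨a, ha⟩) :=
    Finset.filter_congr fun π _ => by
      constructor
      · exact fun h => Subtype.ext h
      · exact fun h => congrArg Subtype.val h
  rw [hfil, pl_key (fun x : {x // x ∈ e} => s x.val) ⟨a, ha⟩ e.card h0 (Fintype.card_coe e),
    ← Finset.sum_coe_sort e (fun b => Real.exp (s b))]
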